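/- arXiv:1502.08050 — 5 statements merged into one kernel-verified Lean document; each statement's English description precedes it below -/
import Mathlib

section
/- For all positive integers k and n, the identity Σ_{ℓ=1}^{n} ((−1)^{ℓ−1} (ℓ+1)/ℓ²) · C(kℓ, ℓ+1) · C((k−1)ℓ, n−ℓ) = (−1)^{n−1} k(k−1)/n holds in the rational numbers. Equivalently, the formal power series F(k,1,x) satisfies F(k, 1, y(1+y)^{k−1}) = k(k−1) log(1+y) as formal power series in y over ℚ. -/
open Finset

lemma FS_pascal_block (n : ℕ) (m j : ℕ) :
    (Nat.choose (m + j) (n + 1) : ℚ) =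
      (Nat.choose m (n + 1) : ℚ) + ∑ i ∈ range j, (Nat.choose (m + i) n : ℚ) := by
  induction j with
  | zero => simp
  | succ j ih =>
      rw [sum_range_succ, show m + (j+1) = (m+j) + 1 from rfl, Nat.choose_succ_succ']
      push_cast
      rw [ih]; ring

lemma FS_diff_step (n : ℕ) (f : ℕ → ℚ) :
    ∑ ℓ ∈ range (n + 2), (-1 : ℚ) ^ ℓ * (Nat.choose (n + 1) ℓ : ℚ) * f ℓ
      = ∑ j ∈ range (n + 1), (-1 : ℚ) ^ j * (Nat.choose n j : ℚ) * (f j - f (j + 1)) := by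
  rw [Finset.sum_range_succ' (fun ℓ => (-1 : ℚ) ^ ℓ * (Nat.choose (n + 1) ℓ : ℚ) * f ℓ) (n + 1)]
  have h0 : ∑ j ∈ range (n + 1), (-1 : ℚ) ^ (j+1) * (Nat.choose (n + 1) (j+1) : ℚ) * f (j+1)
      = ∑ j ∈ range (n + 1), ((-1 : ℚ) ^ (j+1) * (Nat.choose n j : ℚ) * f (j+1)
          + (-1 : ℚ) ^ (j+1) * (Nat.choose n (j+1) : ℚ) * f (j+1)) := by
    refine Finset.sum_congr rfl fun j _ => ?_
    rw [Nat.choose_succ_succ]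
    push_cast; ring
  rw [h0, Finset.sum_add_distrib]
  have key : ∑ j ∈ range (n + 1), (-1 : ℚ) ^ (j+1) * (Nat.choose n (j+1) : ℚ) * f (j+1)
      = ∑ j ∈ range n, (-1 : ℚ) ^ (j+1) * (Nat.choose n (j+1) : ℚ) * f (j+1) := by
    rw [Finset.sum_range_succ, Nat.choose_succ_self]; simp
  have h1 : ∑ j ∈ range n, (-1 : ℚ) ^ (j+1) * (Nat.choose n (j+1) : ℚ) * f (j+1)
      = ∑ j ∈ range (n + 1), (-1 : ℚ) ^ j * (Nat.choose n j : ℚ) * f j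
        - (-1 : ℚ) ^ 0 * (Nat.choose n 0 : ℚ) * f 0 := by
    rw [Finset.sum_range_succ' (fun j => (-1 : ℚ) ^ j * (Nat.choose n j : ℚ) * f j) n]
    ring
  rw [key, h1]
  have h2 : ∑ j ∈ range (n+1), (-1:ℚ)^j * (Nat.choose n j : ℚ) * (f j - f (j+1))
      = ∑ j ∈ range (n+1), ((-1:ℚ)^j * (Nat.choose n j : ℚ) * f j
          - -((-1:ℚ)^(j+1) * (Nat.choose n j : ℚ) * f (j+1))) :=
    Finset.sum_congr rfl fun j _ => by ring
  rw [h2, Finset.sum_sub_distrib, Finset.sum_neg_distrib]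
  simp only [pow_zero, Nat.choose_zero_right, Nat.cast_one, one_mul]
  ring

lemma FS_core (k : ℕ) : ∀ n c : ℕ,
    ∑ ℓ ∈ range (n + 1), (-1 : ℚ) ^ ℓ * (Nat.choose n ℓ : ℚ) * (Nat.choose (k * ℓ + c) n : ℚ)
      = (-(k : ℚ)) ^ n := by
  intro n
  induction n with
  | zero => intro c; simp
  | succ n ih =>
      intro c
      rw [show n + 1 + 1 = n + 2 from rfl,
        FS_diff_step n (fun ℓ => (Nat.choose (k * ℓ + c) (n + 1) : ℚ))]
      have per : ∀ j ∈ range (n + 1),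
          (-1 : ℚ) ^ j * (Nat.choose n j : ℚ)
            * ((Nat.choose (k * j + c) (n + 1) : ℚ) - (Nat.choose (k * (j + 1) + c) (n + 1) : ℚ))
          = ∑ i ∈ range k,
              -((-1 : ℚ) ^ j * (Nat.choose n j : ℚ) * (Nat.choose (k * j + (c + i)) n : ℚ)) := by
        intro j _
        have e : k * (j + 1) + c = (k * j + c) + k := by ring
        rw [e, FS_pascal_block n (k * j + c) k]
        have step : (-1 : ℚ) ^ j * (Nat.choose n j : ℚ)
            * ((Nat.choose (k * j + c) (n + 1) : ℚ)
              - ((Nat.choose (k * j + c) (n + 1) : ℚ)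
                + ∑ i ∈ range k, (Nat.choose (k * j + c + i) n : ℚ)))
            = -((-1 : ℚ) ^ j * (Nat.choose n j : ℚ)
                * ∑ i ∈ range k, (Nat.choose (k * j + c + i) n : ℚ)) := by ring
        rw [step, Finset.mul_sum, ← Finset.sum_neg_distrib]
        exact Finset.sum_congr rfl fun i _ => by
          rw [show k * j + (c + i) = k * j + c + i from by ring]
      rw [Finset.sum_congr rfl per, Finset.sum_comm]
      have inner : ∀ i ∈ range k,
          ∑ j ∈ range (n + 1),
              -((-1 : ℚ) ^ j * (Nat.choose n j : ℚ) * (Nat.choose (k * j + (c + i)) n : ℚ))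
            = -(-(k : ℚ)) ^ n := by
        intro i _
        rw [Finset.sum_neg_distrib, ih (c + i)]
      rw [Finset.sum_congr rfl inner, Finset.sum_const, card_range]
      push_cast
      ring

lemma FS_swap (k ℓ n : ℕ) (hk : 1 ≤ k) (hl : ℓ ≤ n) :
    Nat.choose (k * ℓ) ℓ * Nat.choose ((k - 1) * ℓ) (n - ℓ)
      = Nat.choose n ℓ * Nat.choose (k * ℓ) n := by
  have h1 : (k - 1) * ℓ = k * ℓ - ℓ := by
    cases k with
    | zero => omega
    | succ m => rw [Nat.succ_sub_one, Nat.add_mul, one_mul, Nat.add_sub_cancel]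
  rw [h1]
  by_cases h : n ≤ k * ℓ
  · rw [← Nat.choose_mul (n := k * ℓ) hl, Nat.mul_comm]
  · push_neg at h
    have hlk : ℓ ≤ k * ℓ := Nat.le_mul_of_pos_left ℓ hk
    rw [Nat.choose_eq_zero_of_lt h, Nat.choose_eq_zero_of_lt (show k * ℓ - ℓ < n - ℓ by omega)]
    simp

lemma FS_g (k n : ℕ) (hk : 1 ≤ k) (hn : 1 ≤ n) :
    ∑ ℓ ∈ Icc 1 n, (-1 : ℚ) ^ (ℓ - 1) * (Nat.choose (k * ℓ) ℓ : ℚ)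
        * (Nat.choose ((k - 1) * ℓ) (n - ℓ) : ℚ)
      = (-1 : ℚ) ^ (n - 1) * (k : ℚ) ^ n := by
  have hcore := FS_core k n 0
  rw [Finset.sum_range_succ'
    (fun ℓ => (-1 : ℚ) ^ ℓ * (Nat.choose n ℓ : ℚ) * (Nat.choose (k * ℓ + 0) n : ℚ)) n] at hcore
  simp only [Nat.mul_zero, Nat.zero_add, pow_zero, Nat.choose_zero_right, Nat.cast_one,
    one_mul, Nat.choose_eq_zero_of_lt hn, Nat.cast_zero, mul_zero, add_zero] at hcore
  have hIcc : Finset.Icc 1 n = Finset.Ico 1 (n + 1) := by rw [Finset.Ico_add_one_right_eq_Icc]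
  rw [hIcc, Finset.sum_Ico_eq_sum_range]
  simp only [Nat.add_sub_cancel]
  have per : ∀ i ∈ range n,
      (-1 : ℚ) ^ (1 + i - 1) * (Nat.choose (k * (1 + i)) (1 + i) : ℚ)
          * (Nat.choose ((k - 1) * (1 + i)) (n - (1 + i)) : ℚ)
        = -((-1 : ℚ) ^ (i + 1) * (Nat.choose n (i + 1) : ℚ)
           
 * (Nat.choose (k * (i + 1)) n : ℚ)) := by
    intro i hi
    have hi' : i + 1 ≤ n := by simpa using (Finset.mem_range.mp hi)
    have hswap := FS_swap k (i + 1) n hk hi'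
    rw [show 1 + i - 1 = i from by omega, show 1 + i = i + 1 from by omega]
    have : ((Nat.choose (k * (i+1)) (i+1) : ℕ) : ℚ) * ((Nat.choose ((k-1) * (i+1)) (n - (i+1)) : ℕ) : ℚ)
        = ((Nat.choose n (i+1) : ℕ) : ℚ) * ((Nat.choose (k * (i+1)) n : ℕ) : ℚ) := by
      exact_mod_cast congrArg (fun x : ℕ => (x : ℚ)) hswap
    rw [mul_assoc, this]
    ring
  rw [Finset.sum_congr rfl per, Finset.sum_neg_distrib, hcore]
  obtain ⟨m, rfl⟩ : ∃ m, n = m + 1 := ⟨n - 1, by omega⟩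
  simp only [Nat.add_sub_cancel]
  rw [neg_pow]
  ring

lemma FS_h_rec (k n : ℕ) (hk : 2 ≤ k) (hn : 1 ≤ n) :
    (∑ ℓ ∈ Icc 1 n, (-1 : ℚ) ^ (ℓ - 1) * (Nat.choose (k * ℓ) ℓ : ℚ)
        * (Nat.choose ((k - 1) * ℓ - 1) (n - ℓ) : ℚ))
      + (∑ ℓ ∈ Icc 1 (n - 1), (-1 : ℚ) ^ (ℓ - 1) * (Nat.choose (k * ℓ) ℓ : ℚ)
        * (Nat.choose ((k - 1) * ℓ - 1) (n - ℓ - 1) : ℚ))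
      = ∑ ℓ ∈ Icc 1 n, (-1 : ℚ) ^ (ℓ - 1) * (Nat.choose (k * ℓ) ℓ : ℚ)
        * (Nat.choose ((k - 1) * ℓ) (n - ℓ) : ℚ) := by
  obtain ⟨m, rfl⟩ : ∃ m, n = m + 1 := ⟨n - 1, by omega⟩
  rw [Finset.sum_Icc_succ_top (by omega : 1 ≤ m + 1),
    Finset.sum_Icc_succ_top (by omega : 1 ≤ m + 1)
      (f := fun ℓ => (-1 : ℚ) ^ (ℓ - 1) * (Nat.choose (k * ℓ) ℓ : ℚ)
        * (Nat.choose ((k - 1) * ℓ) (m + 1 - ℓ) : ℚ)),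
    Nat.add_sub_cancel]
  simp only [Nat.sub_self, Nat.choose_zero_right, Nat.cast_one, mul_one]
  have per : ∀ ℓ ∈ Icc 1 m,
      (-1 : ℚ) ^ (ℓ - 1) * (Nat.choose (k * ℓ) ℓ : ℚ)
          * (Nat.choose ((k - 1) * ℓ - 1) (m + 1 - ℓ) : ℚ)
        + (-1 : ℚ) ^ (ℓ - 1) * (Nat.choose (k * ℓ) ℓ : ℚ)
          * (Nat.choose ((k - 1) * ℓ - 1) (m + 1 - ℓ - 1) : ℚ)
        = (-1 : ℚ) ^ (ℓ - 1) * (Nat.choose (k * ℓ) ℓ : ℚ)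
          * (Nat.choose ((k - 1) * ℓ) (m + 1 - ℓ) : ℚ) := by
    intro ℓ hℓ
    rw [Finset.mem_Icc] at hℓ
    obtain ⟨a, ha⟩ : ∃ a, (k - 1) * ℓ = a + 1 := ⟨(k - 1) * ℓ - 1, by
      have : 1 * 1 ≤ (k - 1) * ℓ := Nat.mul_le_mul (by omega) (by omega)
      omega⟩
    obtain ⟨b, hb⟩ : ∃ b, m + 1 - ℓ = b + 1 := ⟨m - ℓ, by omega⟩
    rw [ha, hb, Nat.add_sub_cancel, Nat.add_sub_cancel, Nat.choose_succ_succ']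
    push_cast
    ring
  have key : (∑ ℓ ∈ Icc 1 m, (-1 : ℚ) ^ (ℓ - 1) * (Nat.choose (k * ℓ) ℓ : ℚ)
          * (Nat.choose ((k - 1) * ℓ - 1) (m + 1 - ℓ) : ℚ))
        + (∑ ℓ ∈ Icc 1 m, (-1 : ℚ) ^ (ℓ - 1) * (Nat.choose (k * ℓ) ℓ : ℚ)
          * (Nat.choose ((k - 1) * ℓ - 1) (m + 1 - ℓ - 1) : ℚ))
      = ∑ ℓ ∈ Icc 1 m, (-1 : ℚ) ^ (ℓ - 1) * (Nat.choose (k * ℓ) ℓ : ℚ)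
          * (Nat.choose ((k - 1) * ℓ) (m + 1 - ℓ) : ℚ) := by
    rw [← Finset.sum_add_distrib]
    exact Finset.sum_congr rfl per
  linear_combination key

lemma FS_h_closed (k : ℕ) (hk : 2 ≤ k) :
    ∀ n : ℕ, 1 ≤ n →
    ∑ ℓ ∈ Icc 1 (n - 1), (-1 : ℚ) ^ (ℓ - 1) * (Nat.choose (k * ℓ) ℓ : ℚ)
        * (Nat.choose ((k - 1) * ℓ - 1) (n - ℓ - 1) : ℚ)
      = (-1 : ℚ) ^ n * ((k : ℚ) ^ n - k) / ((k : ℚ) - 1) := by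
  intro n
  induction n with
  | zero => omega
  | succ n ih =>
      intro _
      rcases Nat.eq_zero_or_pos n with h0 | hpos
      · subst h0; simp
      · have hrec := FS_h_rec k n hk hpos
        have hg := FS_g k n (by omega) hpos
        have hkne : (k : ℚ) - 1 ≠ 0 := by
          have : (2 : ℚ) ≤ (k : ℚ) := by exact_mod_cast hk
          linarith
        -- (n+1) - 1 = n ; (n+1) - ℓ - 1 = n - ℓ for ℓ ≤ n
        have e1 : ∑ ℓ ∈ Icc 1 (n + 1 - 1), (-1 : ℚ) ^ (ℓ - 1) * (Nat.choose (k * ℓ) ℓ : ℚ)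
              * (Nat.choose ((k - 1) * ℓ - 1) (n + 1 - ℓ - 1) : ℚ)
            = ∑ ℓ ∈ Icc 1 n, (-1 : ℚ) ^ (ℓ - 1) * (Nat.choose (k * ℓ) ℓ : ℚ)
              * (Nat.choose ((k - 1) * ℓ - 1) (n - ℓ) : ℚ) := by
          rw [Nat.add_sub_cancel]
          refine Finset.sum_congr rfl fun ℓ hℓ => ?_
          rw [Finset.mem_Icc] at hℓ
          rw [show n + 1 - ℓ - 1 = n - ℓ by omega]
        obtain ⟨m, rfl⟩ : ∃ m, n = m + 1 := ⟨n - 1, by omega⟩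
        simp only [Nat.add_sub_cancel] at hg hrec
        have hih := ih hpos
        rw [Nat.add_sub_cancel] at hih
        have hih2 : ((k : ℚ) - 1) * (∑ ℓ ∈ Icc 1 m, (-1 : ℚ) ^ (ℓ - 1)
              * (Nat.choose (k * ℓ) ℓ : ℚ) * (Nat.choose ((k - 1) * ℓ - 1) (m + 1 - ℓ - 1) : ℚ))
            = (-1 : ℚ) ^ (m + 1) * ((k : ℚ) ^ (m + 1) - k) := by
          rw [hih]; field_simp
        rw [e1, eq_div_iff hkne]
        linear_combination ((k : ℚ) - 1) * hrec + ((k : ℚ) - 1) * hg - hih2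

lemma FS_A (k n : ℕ) (hk : 2 ≤ k) (hn : 1 ≤ n) :
    ∑ ℓ ∈ Icc 1 n, (-1 : ℚ) ^ (ℓ - 1) / (ℓ : ℚ) * (Nat.choose (k * ℓ) ℓ : ℚ)
        * (Nat.choose ((k - 1) * ℓ) (n - ℓ) : ℚ)
      = (-1 : ℚ) ^ (n - 1) * (k : ℚ) / (n : ℚ) := by
  have hg := FS_g k n (by omega) hn
  have hh := FS_h_closed k hk n hn
  have hn0 : (n : ℚ) ≠ 0 := Nat.cast_ne_zero.mpr (by omega)
  have hkne : (k : ℚ) - 1 ≠ 0 := by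
    have : (2 : ℚ) ≤ (k : ℚ) := by exact_mod_cast hk
    linarith
  have hh2 : ((k : ℚ) - 1) * (∑ ℓ ∈ Icc 1 (n - 1), (-1 : ℚ) ^ (ℓ - 1)
        * (Nat.choose (k * ℓ) ℓ : ℚ) * (Nat.choose ((k - 1) * ℓ - 1) (n - ℓ - 1) : ℚ))
      = (-1 : ℚ) ^ n * ((k : ℚ) ^ n - k) := by
    rw [hh]; field_simp
  -- the extra sum
  have hE : ∑ ℓ ∈ Icc 1 n, ((n - ℓ : ℕ) : ℚ) / (ℓ : ℚ)
        * ((-1 : ℚ) ^ (ℓ - 1) * (Nat.choose (k * ℓ) ℓ : ℚ)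
          * (Nat.choose ((k - 1) * ℓ) (n - ℓ) : ℚ))
      = ((k : ℚ) - 1) * ∑ ℓ ∈ Icc 1 (n - 1), (-1 : ℚ) ^ (ℓ - 1)
          * (Nat.choose (k * ℓ) ℓ : ℚ) * (Nat.choose ((k - 1) * ℓ - 1) (n - ℓ - 1) : ℚ) := by
    obtain ⟨m, rfl⟩ : ∃ m, n = m + 1 := ⟨n - 1, by omega⟩
    rw [Finset.sum_Icc_succ_top (by omega : 1 ≤ m + 1), Nat.sub_self, Nat.add_sub_cancel]
    simp only [Nat.cast_zero, zero_div, zero_mul, add_zero]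
    rw [Finset.mul_sum]
    refine Finset.sum_congr rfl fun ℓ hℓ => ?_
    rw [Finset.mem_Icc] at hℓ
    obtain ⟨a, ha⟩ : ∃ a, (k - 1) * ℓ = a + 1 := ⟨(k - 1) * ℓ - 1, by
      have : 1 * 1 ≤ (k - 1) * ℓ := Nat.mul_le_mul (by omega) (by omega)
      omega⟩
    obtain ⟨b, hb⟩ : ∃ b, m + 1 - ℓ = b + 1 := ⟨m - ℓ, by omega⟩
    have hnat : (m + 1 - ℓ) * Nat.choose ((k - 1) * ℓ) (m + 1 - ℓ)
        = ((k - 1) * ℓ) * Nat.choose ((k - 1) * ℓ - 1) (m + 1 - ℓ - 1) := by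
      rw [ha, hb, Nat.add_sub_cancel, Nat.add_sub_cancel]
      have h := Nat.add_one_mul_choose_eq a b
      calc (b + 1) * Nat.choose (a + 1) (b + 1)
          = Nat.choose (a + 1) (b + 1) * (b + 1) := Nat.mul_comm _ _
        _ = (a + 1) * Nat.choose a b := h.symm
    have hcast : ((m + 1 - ℓ : ℕ) : ℚ) * (Nat.choose ((k - 1) * ℓ) (m + 1 - ℓ) : ℚ)
        = (((k - 1) * ℓ : ℕ) : ℚ) * (Nat.choose ((k - 1) * ℓ - 1) (m + 1 - ℓ - 1) : ℚ) := by
      exact_mod_cast congrArg (fun x : ℕ => (x : ℚ)) hnat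
    have hkc : (((k - 1) * ℓ : ℕ) : ℚ) = ((k : ℚ) - 1) * (ℓ : ℚ) := by
      push_cast [Nat.cast_sub (by omega : 1 ≤ k)]
      ring
    have hl0 : (ℓ : ℚ) ≠ 0 := by
      have : 0 < ℓ := by omega
      positivity
    rw [hkc] at hcast
    field_simp
    linear_combination (Nat.choose (k * ℓ) ℓ : ℚ) * hcast
  have key : (n : ℚ) * ∑ ℓ ∈ Icc 1 n, (-1 : ℚ) ^ (ℓ - 1) / (ℓ : ℚ)
        * (Nat.choose (k * ℓ) ℓ : ℚ) * (Nat.choose ((k - 1) * ℓ) (n - ℓ) : ℚ)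
      = ∑ ℓ ∈ Icc 1 n, ((-1 : ℚ) ^ (ℓ - 1) * (Nat.choose (k * ℓ) ℓ : ℚ)
            * (Nat.choose ((k - 1) * ℓ) (n - ℓ) : ℚ)
          + ((n - ℓ : ℕ) : ℚ) / (ℓ : ℚ) * ((-1 : ℚ) ^ (ℓ - 1)
            * (Nat.choose (k * ℓ) ℓ : ℚ) * (Nat.choose ((k - 1) * ℓ) (n - ℓ) : ℚ))) := by
    rw [Finset.mul_sum]
    refine Finset.sum_congr rfl fun ℓ hℓ => ?_
    rw [Finset.mem_Icc] at hℓ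
    have hc : (ℓ : ℚ) + ((n - ℓ : ℕ) : ℚ) = (n : ℚ) := by
      exact_mod_cast congrArg (fun x : ℕ => (x : ℚ)) (by omega : ℓ + (n - ℓ) = n)
    have hl0 : (ℓ : ℚ) ≠ 0 := by
      have : 0 < ℓ := by omega
      positivity
    rw [← hc]
    field_simp
  have big := key
  rw [Finset.sum_add_distrib, hg, hE] at big
  rw [eq_div_iff hn0]
  obtain ⟨m, rfl⟩ : ∃ m, n = m + 1 := ⟨n - 1, by omega⟩
  simp only [Nat.add_sub_cancel] at big hh2 ⊢
  linear_combination big + hh2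

/-- For positive integers `k` and `n`,
`∑_{ℓ=1}^{n} ((−1)^{ℓ−1}(ℓ+1)/ℓ²) C(kℓ, ℓ+1) C((k−1)ℓ, n−ℓ) = (−1)^{n−1} k(k−1)/n`
in `ℚ`; equivalently, `F(k,1, y(1+y)^{k−1}) = k(k−1) log(1+y)` as formal power
series in `y`. -/
theorem F_substitution_identity (k n : ℕ) (hk : 0 < k) (hn : 0 < n) :
    ∑ ℓ ∈ Finset.Icc 1 n,
        ((-1 : ℚ) ^ (ℓ - 1) * (ℓ + 1) / (ℓ : ℚ) ^ 2
          * (Nat.choose (k * ℓ) (ℓ + 1) : ℚ)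
          * (Nat.choose ((k - 1) * ℓ) (n - ℓ) : ℚ))
      = (-1 : ℚ) ^ (n - 1) * k * ((k : ℚ) - 1) / n := by
  by_cases hk1 : k = 1
  · subst hk1
    rw [Finset.sum_eq_zero fun ℓ hℓ => by
      rw [Nat.choose_eq_zero_of_lt (by omega : 1 * ℓ < ℓ + 1)]
      simp]
    norm_num
  · have hk2 : 2 ≤ k := by omega
    have hA := FS_A k n hk2 hn
    have per : ∀ ℓ ∈ Finset.Icc 1 n,
        ((-1 : ℚ) ^ (ℓ - 1) * (ℓ + 1) / (ℓ : ℚ) ^ 2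
            * (Nat.choose (k * ℓ) (ℓ + 1) : ℚ)
            * (Nat.choose ((k - 1) * ℓ) (n - ℓ) : ℚ))
          = ((k : ℚ) - 1) * ((-1 : ℚ) ^ (ℓ - 1) / (ℓ : ℚ) * (Nat.choose (k * ℓ) ℓ : ℚ)
              * (Nat.choose ((k - 1) * ℓ) (n - ℓ) : ℚ)) := by
      intro ℓ hℓ
      rw [Finset.mem_Icc] at hℓ
      have hnat : Nat.choose (k * ℓ) (ℓ + 1) * (ℓ + 1) = Nat.choose (k * ℓ) ℓ * ((k - 1) * ℓ) := by
        rw [Nat.choose_succ_right_eq]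
        congr 1
        cases k with
        | zero => omega
        | succ m => rw [Nat.succ_sub_one, Nat.succ_mul, Nat.add_sub_cancel]
      have hcast : (Nat.choose (k * ℓ) (ℓ + 1) : ℚ) * ((ℓ : ℚ) + 1)
          = (Nat.choose (k * ℓ) ℓ : ℚ) * (((k : ℚ) - 1) * (ℓ : ℚ)) := by
        have := congrArg (fun x : ℕ => (x : ℚ)) hnat
        push_cast at this
        rw [Nat.cast_sub (by omega : 1 ≤ k)] at this
        push_cast at this
        convert this using 2 <;> push_cast <;> ring
      have hl0 : (ℓ : ℚ) ≠ 0 := Nat.cast_ne_zero.mpr (by omega)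
      have hl1 : (ℓ : ℚ) + 1 ≠ 0 := by positivity
      have hC1 : (Nat.choose (k * ℓ) (ℓ + 1) : ℚ)
          = (Nat.choose (k * ℓ) ℓ : ℚ) * (((k : ℚ) - 1) * (ℓ : ℚ)) / ((ℓ : ℚ) + 1) := by
        rw [eq_div_iff hl1]
        linear_combination hcast
      rw [hC1]
      field_simp
    rw [Finset.sum_congr rfl per, ← Finset.mul_sum, hA]
    ring
end

section
/- Let k and M be positive integers and let β be a complex number. Then the coefficient of x^M in the formal power series exp(β F(k,1,x)) over ℂ equals (β/M) · k(k−1) · C(k(k−1)β − (k−1)M − 1, M−1), where C(z, m) denotes the generalized binomial coefficient. -/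
open PowerSeries

/-- The formal power series `F(k,r,x) = (k−r) ∑_{ℓ≥1} ((−1)^{ℓ−1}/ℓ) C(kℓ, rℓ) x^ℓ`. -/
noncomputable def Fser (K : Type*) [Field K] (k r : ℕ) : PowerSeries K :=
  PowerSeries.mk fun ℓ => if ℓ = 0 then 0 else
    ((k : K) - (r : K)) * ((-1 : K) ^ (ℓ - 1) / (ℓ : K)) * (Nat.choose (k * ℓ) (r * ℓ) : K)

/-- The exponential `exp(G) = ∑_{n≥0} G^n / n!` of a power series `G` with zero constant
term: since `G^n` has no terms of degree `< n`, the coefficient of `x^M` is the finite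
sum `∑_{n=0}^{M} (coeff M (G^n)) / n!`. -/
noncomputable def expPS {K : Type*} [Field K] (G : PowerSeries K) : PowerSeries K :=
  PowerSeries.mk fun M => ∑ n ∈ Finset.range (M + 1),
    PowerSeries.coeff (R := K) M (G ^ n) / (n.factorial : K)

/-- The generalized binomial coefficient `C(z, m) = (∏_{j=0}^{m−1} (z − j)) / m!`. -/
noncomputable def gchoose (z : ℂ) (m : ℕ) : ℂ :=
  (∏ j ∈ Finset.range m, (z - (j : ℂ))) / (m.factorial : ℂ)

namespace CoeffExpAux
open Finset PowerSeries

noncomputable def D (k : ℕ) (r : ℂ) : ℕ → ℂ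
  | 0 => 1
  | (j+1) => r / ((j+1).factorial : ℂ) * ∏ i ∈ range j, ((k : ℂ) * (j+1) + r - 1 - i)

noncomputable def T (k : ℕ) (r : ℂ) (M : ℕ) : ℂ :=
  ((M.factorial : ℂ))⁻¹ * ∏ i ∈ range M, ((k : ℂ) * M + r - i)

noncomputable def S (k : ℕ) (r : ℂ) (M : ℕ) : ℂ :=
  ∑ ℓ ∈ range (M + 1), (((k * ℓ).choose ℓ : ℕ) : ℂ) * D k r (M - ℓ)

lemma D_zero (k : ℕ) (j : ℕ) : D k 0 (j+1) = 0 := by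
  simp [D]

private lemma natfac_ne (m : ℕ) : ((m.factorial : ℕ) : ℂ) ≠ 0 := by
  exact_mod_cast Nat.factorial_ne_zero m

/-- The Pascal-type recurrence of Gould polynomials. -/
lemma D_pascal (k : ℕ) (r : ℂ) (j : ℕ) :
    D k (r + 1) (j + 1) - D k r (j + 1) = D k (r + k) j := by
  cases j with
  | zero => simp [D]
  | succ j =>
    simp only [D]
    push_cast
    set W : ℂ := ∏ i ∈ range j, ((k : ℂ) * ((j:ℂ) + 1 + 1) + r - 1 - i) with hW
    have hW1 : (∏ x ∈ range (j+1), ((k : ℂ) * ((j:ℂ) + 1 + 1) + (r+1) - 1 - (x:ℂ)))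
        = ((k : ℂ) * ((j:ℂ) + 1 + 1) + r) * W := by
      rw [prod_range_succ']
      have h0 : (k : ℂ) * ((j:ℂ) + 1 + 1) + (r+1) - 1 - ((0:ℕ):ℂ)
          = (k : ℂ) * ((j:ℂ) + 1 + 1) + r := by push_cast; ring
      rw [h0, mul_comm, hW]
      congr 1
      apply prod_congr rfl
      intro i _
      push_cast; ring
    have hW2 : (∏ x ∈ range (j+1), ((k : ℂ) * ((j:ℂ) + 1 + 1) + r - 1 - (x:ℂ)))
        = W * ((k : ℂ) * ((j:ℂ) + 1 + 1) + r - 1 - (j:ℂ)) := by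
      rw [prod_range_succ]
    have hW3 : (∏ i ∈ range j, ((k : ℂ) * ((j:ℂ) + 1) + (r + (k:ℂ)) - 1 - (i:ℂ))) = W := by
      apply prod_congr rfl
      intro i _
      push_cast; ring
    rw [hW1, hW2, hW3]
    have hfac : (((j+1+1).factorial : ℕ) : ℂ) = ((j:ℂ)+1+1) * (((j+1).factorial : ℕ) : ℂ) := by
      rw [Nat.factorial_succ]
      push_cast; ring
    have hne : (((j+1).factorial : ℕ) : ℂ) ≠ 0 := natfac_ne _
    have hne2 : ((j:ℂ)+1+1) ≠ 0 := by
      have : ((j:ℂ)+1+1) = ((j+2 : ℕ) : ℂ) := by push_cast; ring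
      rw [this]
      exact_mod_cast Nat.succ_ne_zero (j+1)
    rw [hfac]
    field_simp
    ring

lemma S_step (k : ℕ) (r : ℂ) (M : ℕ) :
    S k (r + 1) (M + 1) = S k r (M + 1) + S k (r + k) M := by
  have h : S k (r + 1) (M + 1) - S k r (M + 1) = S k (r + k) M := by
    unfold S
    rw [← sum_sub_distrib]
    have : ∀ ℓ ∈ range (M + 2),
        (((k * ℓ).choose ℓ : ℕ) : ℂ) * D k (r+1) (M + 1 - ℓ)
          - (((k * ℓ).choose ℓ : ℕ) : ℂ) * D k r (M + 1 - ℓ)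
        = (if ℓ = M + 1 then 0 else (((k * ℓ).choose ℓ : ℕ) : ℂ) * D k (r + k) (M - ℓ)) := by
      intro ℓ hℓ
      rw [mem_range] at hℓ
      by_cases hcase : ℓ = M + 1
      · subst hcase; simp [D]
      · have hle : ℓ ≤ M := by omega
        have : M + 1 - ℓ = (M - ℓ) + 1 := by omega
        rw [if_neg hcase, this, ← mul_sub, D_pascal]
    rw [sum_congr rfl this, sum_range_succ, if_pos rfl, add_zero]
    apply sum_congr rfl
    intro x hx
    rw [mem_range] at hx
    rw [if_neg (by omega)]
  linear_combination h

lemma prod_cast_desc (a m : ℕ) :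
    ∏ i ∈ range m, ((a : ℂ) - (i : ℂ)) = ((a.descFactorial m : ℕ) : ℂ) := by
  rcases le_or_gt m a with h | h
  · rw [Nat.descFactorial_eq_prod_range]
    push_cast [Nat.cast_prod]
    apply prod_congr rfl
    intro i hi
    rw [mem_range] at hi
    rw [Nat.cast_sub (by omega)]
  · rw [Nat.descFactorial_eq_zero_iff_lt.mpr h, Nat.cast_zero]
    apply prod_eq_zero (mem_range.mpr h)
    simp

lemma T_nat (k n M : ℕ) : T k (n : ℂ) M = (((k * M + n).choose M : ℕ) : ℂ) := by
  unfold T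
  have h1 : ∀ i ∈ range M, (k : ℂ) * (M : ℂ) + (n : ℂ) - (i : ℂ)
      = ((k * M + n : ℕ) : ℂ) - (i : ℂ) := by
    intro i _; push_cast; ring
  rw [prod_congr rfl h1, prod_cast_desc, Nat.descFactorial_eq_factorial_mul_choose]
  push_cast
  rw [← mul_assoc, inv_mul_cancel₀ (by exact_mod_cast Nat.factorial_ne_zero M), one_mul]

lemma star_nat (k : ℕ) : ∀ M n : ℕ, S k (n : ℂ) M = T k (n : ℂ) M := by
  intro M
  induction M with
  | zero =>
    intro n
    simp [S, T, D]
  | succ M ihM =>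
    intro n
    induction n with
    | zero =>
      have hS : S k ((0:ℕ) : ℂ) (M + 1) = (((k * (M+1)).choose (M+1) : ℕ) : ℂ) := by
        unfold S
        rw [Nat.cast_zero]
        rw [Finset.sum_eq_single (M+1)]
        · simp [D]
        · intro b hb hne
          rw [mem_range] at hb
          have : M + 1 - b = (M - b) + 1 := by omega
          rw [this, D_zero, mul_zero]
        · intro hmem
          exact absurd (mem_range.mpr (by omega)) hmem
      rw [hS, T_nat]
      norm_num
    | succ n ihn =>
      have hc : ((n + 1 : ℕ) : ℂ) = (n : ℂ) + 1 := by push_cast; ring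
      have hc2 : (n : ℂ) + (k : ℂ) = ((n + k : ℕ) : ℂ) := by push_cast; ring
      rw [hc, S_step, ihn, hc2, ihM (n + k), T_nat, T_nat, ← hc, T_nat]
      have h1 : k * (M + 1) + (n + 1) = (k * (M + 1) + n) + 1 := by omega
      have h2 : k * M + (n + k) = k * (M + 1) + n := by ring
      rw [h1, h2, Nat.choose_succ_succ (k * (M+1) + n) M]
      push_cast
      ring

noncomputable def Dp (k : ℕ) : ℕ → Polynomial ℂ
  | 0 => 1
  | (j+1) => Polynomial.C (((j+1).factorial : ℂ))⁻¹ *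
      (Polynomial.X * ∏ i ∈ range j, (Polynomial.X + Polynomial.C ((k : ℂ) * (j+1) - 1 - i)))

noncomputable def Sp (k : ℕ) (M : ℕ) : Polynomial ℂ :=
  ∑ ℓ ∈ range (M + 1), Polynomial.C (((k * ℓ).choose ℓ : ℕ) : ℂ) * Dp k (M - ℓ)

noncomputable def Tp (k : ℕ) (M : ℕ) : Polynomial ℂ :=
  Polynomial.C ((M.factorial : ℂ))⁻¹ * ∏ i ∈ range M, (Polynomial.X + Polynomial.C ((k : ℂ) * M - i))

lemma Dp_eval (k : ℕ) (j : ℕ) (r : ℂ) : (Dp k j).eval r = D k r j := by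
  cases j with
  | zero => simp [Dp, D]
  | succ j =>
    simp only [Dp, D, Polynomial.eval_mul, Polynomial.eval_C, Polynomial.eval_X,
      Polynomial.eval_prod, Polynomial.eval_add]
    rw [div_eq_mul_inv]
    rw [show (∏ i ∈ range j, (r + ((k : ℂ) * (↑j + 1) - 1 - ↑i)))
        = ∏ i ∈ range j, ((k : ℂ) * (↑j + 1) + r - 1 - ↑i) from
      prod_congr rfl fun i _ => by ring]
    ring

lemma Sp_eval (k M : ℕ) (r : ℂ) : (Sp k M).eval r = S k r M := by
  unfold Sp S
  rw [Polynomial.eval_finset_sum]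
  exact sum_congr rfl fun ℓ _ => by
    rw [Polynomial.eval_mul, Polynomial.eval_C, Dp_eval]

lemma Tp_eval (k M : ℕ) (r : ℂ) : (Tp k M).eval r = T k r M := by
  unfold Tp T
  rw [Polynomial.eval_mul, Polynomial.eval_C, Polynomial.eval_prod]
  congr 1
  exact prod_congr rfl fun i _ => by
    rw [Polynomial.eval_add, Polynomial.eval_X, Polynomial.eval_C]; ring

lemma poly_ext (p q : Polynomial ℂ) (h : ∀ n : ℕ, p.eval (n : ℂ) = q.eval (n : ℂ)) : p = q := by
  rw [← sub_eq_zero]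
  apply Polynomial.eq_zero_of_infinite_isRoot
  apply Set.Infinite.mono (s := Set.range (fun n : ℕ => (n : ℂ)))
  · rintro x ⟨n, rfl⟩
    simp [Polynomial.IsRoot, h n]
  · exact Set.infinite_range_of_injective Nat.cast_injective

lemma star (k M : ℕ) (r : ℂ) : S k r M = T k r M := by
  have h : Sp k M = Tp k M := poly_ext _ _ fun n => by
    rw [Sp_eval, Tp_eval]; exact star_nat k M n
  rw [← Sp_eval, ← Tp_eval, h]

lemma gchoose_reflect (w : ℂ) (m : ℕ) :
    gchoose w m = (-1 : ℂ)^m * gchoose ((m : ℂ) - 1 - w) m := by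
  unfold gchoose
  have h1 : (∏ i ∈ range m, (w - (i:ℂ)))
      = ∏ i ∈ range m, (-(((m:ℂ) - 1 - w) - (i:ℂ))) := by
    rw [← Finset.prod_range_reflect (fun i => w - (i:ℂ)) m]
    apply prod_congr rfl
    intro i hi
    rw [mem_range] at hi
    rw [show ((m - 1 - i : ℕ) : ℂ) = (m:ℂ) - 1 - (i:ℂ) by
      rw [Nat.cast_sub (by omega), Nat.cast_sub (by omega)]; push_cast; ring]
    ring
  rw [h1]
  rw [show (∏ i ∈ range m, (-(((m:ℂ) - 1 - w) - (i:ℂ))))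
      = ∏ i ∈ range m, ((-1:ℂ) * (((m:ℂ) - 1 - w) - (i:ℂ))) from prod_congr rfl fun i _ => by ring]
  rw [Finset.prod_mul_distrib, Finset.prod_const, card_range]
  ring

lemma TD (k : ℕ) (r : ℂ) (m : ℕ) :
    (k : ℂ) * ((m:ℂ)+1) * D k r (m+1) = r * (T k r (m+1) - D k r (m+1)) := by
  simp only [T, D]
  push_cast
  set P : ℂ := ∏ i ∈ range m, ((k:ℂ) * ((m:ℂ)+1) + r - 1 - (i:ℂ)) with hP
  have hQ : (∏ i ∈ range (m+1), ((k:ℂ) * ((m:ℂ)+1) + r - (i:ℂ)))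
      = ((k:ℂ) * ((m:ℂ)+1) + r) * P := by
    rw [prod_range_succ', Nat.cast_zero, sub_zero, mul_comm, hP]
    congr 1
    apply prod_congr rfl
    intro i _
    push_cast; ring
  rw [hQ]
  have hne : (((m+1).factorial : ℕ) : ℂ) ≠ 0 := by exact_mod_cast Nat.factorial_ne_zero (m+1)
  have hfac : (((m+1).factorial : ℕ) : ℂ) ≠ 0 := hne
  field_simp
  ring

/-- final coefficient formula bridge -/
lemma D_to_gchoose (k : ℕ) (β : ℂ) (m : ℕ) :
    (-1:ℂ)^(m+1) * D k (-((k:ℂ) * ((k:ℂ)-1) * β)) (m+1)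
      = β / ((m+1 : ℕ) : ℂ) * ((k : ℂ) * ((k : ℂ) - 1))
        * gchoose ((k : ℂ) * ((k : ℂ) - 1) * β - ((k : ℂ) - 1) * ((m+1 : ℕ) : ℂ) - 1) m := by
  set r : ℂ := -((k:ℂ) * ((k:ℂ)-1) * β) with hr
  rw [gchoose_reflect]
  have harg : ((m : ℂ) - 1 - ((k : ℂ) * ((k : ℂ) - 1) * β - ((k : ℂ) - 1) * ((m+1 : ℕ) : ℂ) - 1))
      = (k:ℂ) * ((m:ℂ)+1) + r - 1 := by
    rw [hr]; push_cast; ring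
  rw [harg]
  unfold gchoose
  show _ * (r / ((m+1).factorial : ℂ) * ∏ i ∈ range m, ((k : ℂ) * ((m:ℂ)+1) + r - 1 - i)) = _
  have hprod : (∏ i ∈ range m, ((k:ℂ) * ((m:ℂ)+1) + r - 1 - (i:ℂ)))
      = ∏ i ∈ range m, (((k:ℂ) * ((m:ℂ)+1) + r - 1) - (i:ℂ)) := by
    apply prod_congr rfl; intro i _; ring
  have hfac : (((m+1).factorial : ℕ) : ℂ) = ((m:ℂ)+1) * ((m.factorial : ℕ) : ℂ) := by
    rw [Nat.factorial_succ]; push_cast; ring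
  have hne : ((m.factorial : ℕ) : ℂ) ≠ 0 := by exact_mod_cast Nat.factorial_ne_zero m
  have hne1 : ((m:ℂ)+1) ≠ 0 := Nat.cast_add_one_ne_zero m
  rw [hprod, hfac]
  have hrr : β * ((k:ℂ) * ((k:ℂ)-1)) = -r := by rw [hr]; ring
  push_cast
  field_simp
  ring

lemma coeff_pow_lt (G : PowerSeries ℂ) (hG : coeff (R := ℂ) 0 G = 0) :
    ∀ n m : ℕ, m < n → coeff (R := ℂ) m (G ^ n) = 0 := by
  intro n
  induction n with
  | zero => exact fun m hm => absurd hm (by omega)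
  | succ n ih =>
    intro m hm
    rw [pow_succ, mul_comm, PowerSeries.coeff_mul]
    apply Finset.sum_eq_zero
    rintro ⟨p, q⟩ hpq
    rw [Finset.HasAntidiagonal.mem_antidiagonal] at hpq
    by_cases hp : p = 0
    · subst hp; rw [hG, zero_mul]
    · have : q < n := by omega
      rw [ih q this, mul_zero]

lemma coeff_expPS (G : PowerSeries ℂ) (m : ℕ) :
    coeff (R := ℂ) m (expPS G) = ∑ n ∈ range (m + 1), coeff (R := ℂ) m (G ^ n) / (n.factorial : ℂ) := by
  simp [expPS, coeff_mk]

lemma coeff_expPS_zero (G : PowerSeries ℂ) : coeff (R := ℂ) 0 (expPS G) = 1 := by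
  simp [expPS, coeff_mk]

lemma coeff_expPS' (G : PowerSeries ℂ) (hG : coeff (R := ℂ) 0 G = 0) (m N : ℕ) (hN : m ≤ N) :
    coeff (R := ℂ) m (expPS G) = ∑ n ∈ range (N + 1), coeff (R := ℂ) m (G ^ n) / (n.factorial : ℂ) := by
  rw [coeff_expPS]
  apply Finset.sum_subset (Finset.range_subset_range.mpr (by omega))
  intro x hx hx'
  rw [mem_range] at *
  rw [coeff_pow_lt G hG x m (by omega), zero_div]

lemma expPS_recurrence (G : PowerSeries ℂ) (hG : coeff (R := ℂ) 0 G = 0) (M : ℕ) (hM : 0 < M) :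
    (M : ℂ) * coeff (R := ℂ) M (expPS G)
      = ∑ ℓ ∈ range (M + 1), (ℓ : ℂ) * coeff (R := ℂ) ℓ G * coeff (R := ℂ) (M - ℓ) (expPS G) := by
  obtain ⟨m, rfl⟩ : ∃ m, M = m + 1 := ⟨M - 1, by omega⟩
  rw [coeff_expPS, mul_sum]
  have step1 : ∀ n ∈ range (m + 2),
      (((m:ℕ) + 1 : ℕ) : ℂ) * (coeff (R := ℂ) (m+1) (G ^ n) / (n.factorial : ℂ))
      = (fun n => if n = 0 then 0 else
          coeff (R := ℂ) m (G ^ (n-1) * d⁄dX ℂ G) / ((n-1).factorial : ℂ)) n := by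
    intro n _
    cases n with
    | zero => simp [PowerSeries.coeff_one]
    | succ n =>
      simp only [if_neg (Nat.succ_ne_zero n), Nat.add_sub_cancel]
      have hd : d⁄dX ℂ (G ^ (n+1)) = (n+1) • (G ^ n • d⁄dX ℂ G) := by
        have := Derivation.leibniz_pow (d⁄dX ℂ) G (n := n + 1)
        simpa using this
      have hco : coeff (R := ℂ) (m+1) (G ^ (n+1)) * ((m:ℂ)+1)
          = ((n:ℂ)+1) * coeff (R := ℂ) m (G ^ n * d⁄dX ℂ G) := by
        have h1 : coeff (R := ℂ) m (d⁄dX ℂ (G ^ (n+1))) = coeff (R := ℂ) (m+1) (G ^ (n+1)) * ((m:ℂ)+1) := by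
          rw [PowerSeries.coeff_derivative]
        rw [hd] at h1
        rw [← h1, smul_eq_mul, map_nsmul, nsmul_eq_mul]
        push_cast; ring
      have hfac : (((n+1).factorial : ℕ) : ℂ) = ((n:ℂ)+1) * ((n.factorial : ℕ) : ℂ) := by
        rw [Nat.factorial_succ]; push_cast; ring
      have hne : ((n.factorial : ℕ) : ℂ) ≠ 0 := by exact_mod_cast Nat.factorial_ne_zero n
      have hne1 : ((n:ℂ)+1) ≠ 0 := Nat.cast_add_one_ne_zero n
      rw [hfac]
      field_simp
      push_cast
      linear_combination hco
  rw [sum_congr rfl step1, Finset.sum_range_succ']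
  simp only [if_true, if_false, ite_true, ite_false, add_zero, Nat.add_sub_cancel]
  rw [sum_congr rfl (fun x (_ : x ∈ range (m+1)) => if_neg (Nat.succ_ne_zero x))]
  have step3 : ∀ n ∈ range (m+1),
      coeff (R := ℂ) m (G ^ n * d⁄dX ℂ G) / ((n.factorial : ℕ) : ℂ)
      = ∑ p ∈ Finset.HasAntidiagonal.antidiagonal m,
          (coeff (R := ℂ) p.1 (G ^ n) / ((n.factorial : ℕ) : ℂ)) * (((p.2:ℂ)+1) * coeff (R := ℂ) (p.2+1) G) := by
    intro n _
    rw [PowerSeries.coeff_mul, Finset.sum_div]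
    apply sum_congr rfl
    rintro ⟨p, q⟩ _
    rw [PowerSeries.coeff_derivative]
    push_cast; ring
  rw [sum_congr rfl step3, Finset.sum_comm]
  have step4 : ∀ p ∈ Finset.HasAntidiagonal.antidiagonal m,
      (∑ n ∈ range (m+1), (coeff (R := ℂ) p.1 (G ^ n) / ((n.factorial : ℕ) : ℂ))
          * (((p.2:ℂ)+1) * coeff (R := ℂ) (p.2+1) G))
      = coeff (R := ℂ) p.1 (expPS G) * (((p.2:ℂ)+1) * coeff (R := ℂ) (p.2+1) G) := by
    rintro ⟨p, q⟩ hpq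
    rw [Finset.HasAntidiagonal.mem_antidiagonal] at hpq
    rw [← Finset.sum_mul]
    congr 1
    rw [coeff_expPS' G hG p m (by omega)]
  rw [sum_congr rfl step4, Finset.Nat.sum_antidiagonal_eq_sum_range_succ_mk]
  conv_rhs => rw [Finset.sum_range_succ']
  simp only [Nat.cast_zero, zero_mul, mul_zero, add_zero, zero_add]
  conv_lhs => rw [← Finset.sum_range_reflect]
  apply sum_congr rfl
  intro i hi
  rw [mem_range] at hi
  have h1 : m + 1 - 1 - i = m - i := by omega
  have h2 : m - (m - i) = i := by omega
  have h3 : m + 1 - (i + 1) = m - i := by omega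
  rw [h1, h2, h3]
  push_cast
  ring

section Main
variable (k : ℕ) (β : ℂ)

/-- The target coefficient sequence. -/
noncomputable def b (k : ℕ) (β : ℂ) (j : ℕ) : ℂ :=
  (-1:ℂ)^j * D k (-((k:ℂ) * ((k:ℂ)-1) * β)) j

lemma coeff_G_zero : coeff (R := ℂ) 0 (PowerSeries.C (R := ℂ) β * Fser ℂ k 1) = 0 := by
  simp [Fser, PowerSeries.coeff_C_mul, PowerSeries.coeff_mk]

lemma coeff_G (ℓ : ℕ) (hl : ℓ ≠ 0) :
    (ℓ : ℂ) * coeff (R := ℂ) ℓ (PowerSeries.C (R := ℂ) β * Fser ℂ k 1)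
      = β * ((k:ℂ) - 1) * (-1:ℂ)^(ℓ-1) * (((k*ℓ).choose ℓ : ℕ) : ℂ) := by
  rw [PowerSeries.coeff_C_mul]
  simp only [Fser, PowerSeries.coeff_mk, if_neg hl, one_mul, Nat.cast_one]
  have : (ℓ : ℂ) ≠ 0 := Nat.cast_ne_zero.mpr hl
  field_simp

/-- `b` satisfies the same recurrence. -/
lemma b_recurrence (hk : 0 < k) (M : ℕ) (hM : 0 < M) :
    (M : ℂ) * b k β M
      = ∑ ℓ ∈ range (M + 1),
          (ℓ : ℂ) * coeff (R := ℂ) ℓ (PowerSeries.C (R := ℂ) β * Fser ℂ k 1) * b k β (M - ℓ) := by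
  set r : ℂ := -((k:ℂ) * ((k:ℂ)-1) * β) with hr
  obtain ⟨m, rfl⟩ : ∃ m, M = m + 1 := ⟨M - 1, by omega⟩
  have hterm : ∀ ℓ ∈ range (m+1),
      ((ℓ+1 : ℕ) : ℂ) * coeff (R := ℂ) (ℓ+1) (PowerSeries.C (R := ℂ) β * Fser ℂ k 1) * b k β (m + 1 - (ℓ+1))
      = (-(β * ((k:ℂ)-1)) * (-1:ℂ)^(m+1))
          * ((((k*(ℓ+1)).choose (ℓ+1) : ℕ) : ℂ) * D k r (m - ℓ)) := by
    intro ℓ hℓ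
    rw [mem_range] at hℓ
    rw [coeff_G k β (ℓ+1) (Nat.succ_ne_zero ℓ)]
    have h1 : m + 1 - (ℓ + 1) = m - ℓ := by omega
    rw [h1]
    unfold b
    rw [Nat.add_sub_cancel]
    have hsgn : (-1:ℂ)^ℓ * (-1:ℂ)^(m - ℓ) = (-1:ℂ)^m := by
      rw [← pow_add]
      congr 1
      omega
    calc β * ((k:ℂ) - 1) * (-1:ℂ)^ℓ * (((k*(ℓ+1)).choose (ℓ+1) : ℕ) : ℂ)
          * ((-1:ℂ)^(m - ℓ) * D k r (m - ℓ))
        = β * ((k:ℂ)-1) * ((-1:ℂ)^ℓ * (-1:ℂ)^(m-ℓ)) * (((k*(ℓ+1)).choose (ℓ+1) : ℕ) : ℂ)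
          * D k r (m - ℓ) := by ring
      _ = _ := by rw [hsgn]; ring
  -- sum over range (m+2), peel off ℓ = 0
  rw [Finset.sum_range_succ']
  simp only [Nat.cast_zero, zero_mul, add_zero]
  rw [sum_congr rfl hterm, ← Finset.mul_sum]
  -- identify the remaining sum with S - D via star
  have hS : S k r (m+1) = (∑ ℓ ∈ range (m+1),
      (((k*(ℓ+1)).choose (ℓ+1) : ℕ) : ℂ) * D k r (m - ℓ)) + D k r (m+1) := by
    unfold S
    rw [Finset.sum_range_succ']
    congr 1
    · apply sum_congr rfl
      intro ℓ hℓ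
      have : m + 1 - (ℓ + 1) = m - ℓ := by omega
      rw [this]
    · simp
  have hsum : (∑ ℓ ∈ range (m+1), (((k*(ℓ+1)).choose (ℓ+1) : ℕ) : ℂ) * D k r (m - ℓ))
      = T k r (m+1) - D k r (m+1) := by
    have := star k (m+1) r
    rw [hS] at this
    linear_combination this
  rw [hsum]
  -- now pure algebra using TD
  have htd := TD k r m
  have hκ : (k : ℂ) ≠ 0 := Nat.cast_ne_zero.mpr (by omega)
  unfold b
  have hrk : -(β * ((k:ℂ)-1)) * (k:ℂ) = r := by rw [hr]; ring
  have goal2 : (k:ℂ) * (((m+1 : ℕ):ℂ) * ((-1:ℂ)^(m+1) * D k r (m+1)))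
      = (k:ℂ) * (-(β * ((k:ℂ)-1)) * (-1:ℂ)^(m+1) * (T k r (m+1) - D k r (m+1))) := by
    push_cast
    calc (k:ℂ) * (((m:ℂ)+1) * ((-1:ℂ)^(m+1) * D k r (m+1)))
        = (-1:ℂ)^(m+1) * ((k:ℂ) * ((m:ℂ)+1) * D k r (m+1)) := by ring
      _ = (-1:ℂ)^(m+1) * (r * (T k r (m+1) - D k r (m+1))) := by rw [htd]
      _ = (-1:ℂ)^(m+1) * ((-(β * ((k:ℂ)-1)) * (k:ℂ)) * (T k r (m+1) - D k r (m+1))) := by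
            rw [hrk]
      _ = _ := by ring
  have := mul_left_cancel₀ hκ goal2
  exact this

lemma coeff_eq_b (hk : 0 < k) : ∀ M, coeff (R := ℂ) M (expPS (PowerSeries.C (R := ℂ) β * Fser ℂ k 1)) = b k β M := by
  intro M
  induction M using Nat.strong_induction_on with
  | _ M ih =>
    cases M with
    | zero =>
      rw [coeff_expPS_zero]
      simp [b, D]
    | succ m =>
      have hrec := expPS_recurrence (PowerSeries.C (R := ℂ) β * Fser ℂ k 1) (coeff_G_zero k β) (m+1) (Nat.succ_pos m)
      have hrec2 := b_recurrence k β hk (m+1) (Nat.succ_pos m)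
      have hsums : (∑ ℓ ∈ range (m + 1 + 1),
          (ℓ : ℂ) * coeff (R := ℂ) ℓ (PowerSeries.C (R := ℂ) β * Fser ℂ k 1)
            * coeff (R := ℂ) (m + 1 - ℓ) (expPS (PowerSeries.C (R := ℂ) β * Fser ℂ k 1)))
          = ∑ ℓ ∈ range (m + 1 + 1),
          (ℓ : ℂ) * coeff (R := ℂ) ℓ (PowerSeries.C (R := ℂ) β * Fser ℂ k 1) * b k β (m + 1 - ℓ) := by
        apply sum_congr rfl
        intro ℓ hℓ
        rw [mem_range] at hℓ
        by_cases h0 : ℓ = 0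
        · subst h0; simp
        · rw [ih (m + 1 - ℓ) (by omega)]
      have hM : ((m+1 : ℕ) : ℂ) ≠ 0 := by exact_mod_cast Nat.succ_ne_zero m
      apply mul_left_cancel₀ hM
      rw [hrec, hsums, ← hrec2]

end Main

end CoeffExpAux

/-- For positive integers `k, M` and `β ∈ ℂ`, the coefficient of `x^M` in
`exp(β F(k,1,x))` equals `(β/M)·k(k−1)·C(k(k−1)β − (k−1)M − 1, M−1)`. -/
theorem coeff_exp_beta_F (k M : ℕ) (hk : 0 < k) (hM : 0 < M) (β : ℂ) :
    PowerSeries.coeff (R := ℂ) M (expPS (PowerSeries.C (R := ℂ) β * Fser ℂ k 1))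
      = β / (M : ℂ) * ((k : ℂ) * ((k : ℂ) - 1))
        * gchoose ((k : ℂ) * ((k : ℂ) - 1) * β - ((k : ℂ) - 1) * (M : ℂ) - 1) (M - 1) := by
  obtain ⟨m, rfl⟩ : ∃ m, M = m + 1 := ⟨M - 1, by omega⟩
  rw [CoeffExpAux.coeff_eq_b k β hk (m+1)]
  unfold CoeffExpAux.b
  rw [CoeffExpAux.D_to_gchoose k β m]
  norm_num
end

section
/- Let k and M be positive integers and let β be a complex number. Then Σ_{ℓ=1}^{M} (−1)^{M−ℓ} · ℓ · C(k(k−1)β, ℓ) · C(kM − ℓ − 1, M − ℓ) = β k(k−1) · C(k(k−1)β − (k−1)M − 1, M − 1), where C(z, m) for complex z denotes the generalized binomial coefficient and C(kM − ℓ − 1, M − ℓ) is the ordinary binomial coefficient. -/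
open Finset Polynomial

lemma descPochhammer_eval_eq_prod (m : ℕ) (z : ℂ) :
    (descPochhammer ℂ m).eval z = ∏ j ∈ Finset.range m, (z - (j : ℂ)) := by
  induction m with
  | zero => simp
  | succ n ih => rw [descPochhammer_succ_eval, ih, Finset.prod_range_succ]

lemma gchoose_eq_choose (z : ℂ) (m : ℕ) : gchoose z m = Ring.choose z m := by
  have h := Ring.descPochhammer_eq_factorial_smul_choose z m
  have h2 : (descPochhammer ℤ m).smeval z = (descPochhammer ℂ m).eval z := by
    rw [← Polynomial.aeval_eq_smeval, ← descPochhammer_map (algebraMap ℤ ℂ),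
      Polynomial.aeval_def, ← Polynomial.eval_map]
  have hfac : (m.factorial : ℂ) ≠ 0 := by
    exact_mod_cast m.factorial_ne_zero
  rw [h2, nsmul_eq_mul] at h
  rw [gchoose, ← descPochhammer_eval_eq_prod, h, mul_div_cancel_left₀ _ hfac]

lemma gchoose_natCast (a m : ℕ) : gchoose (a : ℂ) m = (Nat.choose a m : ℂ) := by
  rw [gchoose_eq_choose, Ring.choose_natCast]

lemma gchoose_add (x y : ℂ) (n : ℕ) :
    gchoose (x + y) n = ∑ j ∈ Finset.range (n + 1), gchoose x j * gchoose y (n - j) := by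
  rw [gchoose_eq_choose, Ring.add_choose_eq n (Commute.all x y),
    Finset.Nat.sum_antidiagonal_eq_sum_range_succ_mk]
  simp [gchoose_eq_choose]

lemma gchoose_neg (x : ℂ) (m : ℕ) :
    (-1 : ℂ) ^ m * gchoose x m = gchoose ((m : ℂ) - 1 - x) m := by
  unfold gchoose
  rw [← mul_div_assoc]
  congr 1
  have h1 : ∏ j ∈ range m, ((m : ℂ) - 1 - x - j) = ∏ j ∈ range m, ((j : ℂ) - x) := by
    rw [← Finset.prod_range_reflect (fun j => ((j : ℂ) - x)) m]
    refine Finset.prod_congr rfl fun j hj => ?_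
    have hj' : j < m := Finset.mem_range.mp hj
    have : ((m - 1 - j : ℕ) : ℂ) = (m : ℂ) - 1 - j := by
      push_cast [Nat.cast_sub (by omega : j ≤ m - 1), Nat.cast_sub (by omega : 1 ≤ m)]
      ring
    rw [this]
    ring
  rw [h1]
  calc (-1 : ℂ) ^ m * ∏ j ∈ range m, (x - (j : ℂ))
      = ∏ j ∈ range m, ((-1) * (x - (j : ℂ))) := by
        rw [Finset.prod_mul_distrib, Finset.prod_const]
        simp [Finset.card_range]
    _ = ∏ j ∈ range m, ((j : ℂ) - x) := by
        refine Finset.prod_congr rfl fun j _ => by ring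

lemma gchoose_mul_left (x : ℂ) (n : ℕ) :
    ((n : ℂ) + 1) * gchoose x (n + 1) = x * gchoose (x - 1) n := by
  unfold gchoose
  rw [Finset.prod_range_succ']
  have h : ∏ j ∈ range n, (x - 1 - (j : ℂ)) = ∏ j ∈ range n, (x - ((j : ℕ) + 1 : ℂ)) := by
    refine Finset.prod_congr rfl fun j _ => by push_cast; ring
  have hfac : (n.factorial : ℂ) ≠ 0 := by exact_mod_cast n.factorial_ne_zero
  have hn1 : ((n : ℂ) + 1) ≠ 0 := by
    exact_mod_cast (Nat.cast_add_one_ne_zero n : ((n : ℂ) + 1) ≠ 0)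
  rw [h, Nat.factorial_succ]
  push_cast
  field_simp
  ring

lemma gchoose_zero_pos (m : ℕ) (hm : 0 < m) : gchoose 0 m = 0 := by
  unfold gchoose
  rw [Finset.prod_eq_zero (Finset.mem_range.mpr hm : 0 ∈ range m) (by simp)]
  simp

/-- For positive integers `k, M` and `β ∈ ℂ`,
`∑_{ℓ=1}^{M} (−1)^{M−ℓ} ℓ C(k(k−1)β, ℓ) C(kM−ℓ−1, M−ℓ)
  = β k(k−1) C(k(k−1)β − (k−1)M − 1, M−1)`,
where the first `C` is the generalized binomial coefficient and
`C(kM−ℓ−1, M−ℓ)` is the ordinary binomial coefficient. -/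
theorem lagrange_expansion_identity (k M : ℕ) (hk : 0 < k) (hM : 0 < M) (β : ℂ) :
    ∑ ℓ ∈ Finset.Icc 1 M,
        (-1 : ℂ) ^ (M - ℓ) * (ℓ : ℂ)
          * gchoose ((k : ℂ) * ((k : ℂ) - 1) * β) ℓ
          * (Nat.choose (k * M - ℓ - 1) (M - ℓ) : ℂ)
      = β * (k : ℂ) * ((k : ℂ) - 1)
        * gchoose ((k : ℂ) * ((k : ℂ) - 1) * β - ((k : ℂ) - 1) * (M : ℂ) - 1) (M - 1) := by
  rcases Nat.lt_or_ge k 2 with hk1 | hk2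
  · -- k = 1
    obtain rfl : k = 1 := by omega
    simp only [Nat.cast_one]
    have hL : ∀ ℓ ∈ Finset.Icc 1 M, (-1 : ℂ) ^ (M - ℓ) * (ℓ : ℂ)
        * gchoose ((1 : ℂ) * ((1 : ℂ) - 1) * β) ℓ
        * (Nat.choose (1 * M - ℓ - 1) (M - ℓ) : ℂ) = 0 := by
      intro ℓ hℓ
      obtain ⟨h1, h2⟩ := Finset.mem_Icc.mp hℓ
      rw [show (1 : ℂ) * ((1 : ℂ) - 1) * β = 0 by ring, gchoose_zero_pos ℓ h1]
      ring
    rw [Finset.sum_eq_zero hL]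
    ring
  · -- k ≥ 2
    have hk2' : 2 ≤ k := hk2
    set a : ℂ := (k : ℂ) * ((k : ℂ) - 1) * β with ha
    have key : ∀ ℓ ∈ Finset.Icc 1 M,
        (-1 : ℂ) ^ (M - ℓ) * (ℓ : ℂ) * gchoose a ℓ
            * (Nat.choose (k * M - ℓ - 1) (M - ℓ) : ℂ)
          = a * (gchoose (a - 1) (ℓ - 1)
              * gchoose ((M : ℂ) - (k : ℂ) * (M : ℂ)) (M - ℓ)) := by
      intro ℓ hℓ
      obtain ⟨h1, h2⟩ := Finset.mem_Icc.mp hℓ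
      have hkM : ℓ + 1 ≤ k * M := by nlinarith
      -- absorb ℓ into gchoose
      obtain ⟨n, rfl⟩ : ∃ n, ℓ = n + 1 := ⟨ℓ - 1, by omega⟩
      have habs : ((n : ℂ) + 1) * gchoose a (n + 1) = a * gchoose (a - 1) n :=
        gchoose_mul_left a n
      -- sign + nat choose into gchoose
      have hneg : (-1 : ℂ) ^ (M - (n + 1)) * (Nat.choose (k * M - (n + 1) - 1) (M - (n + 1)) : ℂ)
          = gchoose ((M : ℂ) - (k : ℂ) * (M : ℂ)) (M - (n + 1)) := by
        rw [← gchoose_natCast, gchoose_neg]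
        congr 1
        have e1 : ((M - (n + 1) : ℕ) : ℂ) = (M : ℂ) - ((n : ℂ) + 1) := by
          push_cast [Nat.cast_sub h2]; ring
        have e2 : ((k * M - (n + 1) - 1 : ℕ) : ℂ) = (k : ℂ) * (M : ℂ) - ((n : ℂ) + 1) - 1 := by
          have : k * M - (n + 1) - 1 = k * M - (n + 2) := by omega
          rw [this]
          push_cast [Nat.cast_sub (by omega : n + 2 ≤ k * M)]
          ring
        rw [e1, e2]
        ring
      calc (-1 : ℂ) ^ (M - (n + 1)) * ((n + 1 : ℕ) : ℂ) * gchoose a (n + 1)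
            * (Nat.choose (k * M - (n + 1) - 1) (M - (n + 1)) : ℂ)
          = (((n : ℂ) + 1) * gchoose a (n + 1))
            * ((-1 : ℂ) ^ (M - (n + 1))
              * (Nat.choose (k * M - (n + 1) - 1) (M - (n + 1)) : ℂ)) := by
            push_cast; ring
        _ = a * (gchoose (a - 1) (n + 1 - 1)
              * gchoose ((M : ℂ) - (k : ℂ) * (M : ℂ)) (M - (n + 1))) := by
            rw [hneg, habs, Nat.add_sub_cancel]; ring
    rw [Finset.sum_congr rfl key, ← Finset.mul_sum]
    -- reindex the sum
    have hre : ∑ ℓ ∈ Finset.Icc 1 M,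
        gchoose (a - 1) (ℓ - 1) * gchoose ((M : ℂ) - (k : ℂ) * (M : ℂ)) (M - ℓ)
        = ∑ j ∈ Finset.range M,
            gchoose (a - 1) j * gchoose ((M : ℂ) - (k : ℂ) * (M : ℂ)) ((M - 1) - j) := by
      rw [show Finset.Icc 1 M = Finset.Ico 1 (M + 1) by rfl, Finset.sum_Ico_eq_sum_range]
      simp only [Nat.add_sub_cancel]
      refine Finset.sum_congr rfl fun j hj => ?_
      have hj' : j < M := by simpa using hj
      congr 2 <;> omega
    rw [hre]
    have hvand := gchoose_add (a - 1) ((M : ℂ) - (k : ℂ) * (M : ℂ)) (M - 1)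
    rw [show M - 1 + 1 = M by omega] at hvand
    rw [← hvand]
    have harg : a - 1 + ((M : ℂ) - (k : ℂ) * (M : ℂ))
        = a - ((k : ℂ) - 1) * (M : ℂ) - 1 := by ring
    rw [harg]
    ring
end

section
/- For all integers k ≥ 1 and r ≥ 0, the identity (1/(2r+1)²) [x²]{exp((2r+1) F(k,r,x))} = −(1/4) C(2k, 2r+1) + (1/2) ((r+1) C(k, r+1))² holds in ℚ, where C(a,b) is the ordinary binomial coefficient. (This is the explicit formula for the index Ω(2, 2r+1, k) of the Kronecker quiver with dimension vector (2, 2r+1) and k arrows.) -/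
lemma coeff_two_expPS (G : PowerSeries ℚ) (h0 : PowerSeries.coeff (R := ℚ) 0 G = 0) :
    PowerSeries.coeff (R := ℚ) 2 (expPS G)
      = PowerSeries.coeff (R := ℚ) 2 G + (PowerSeries.coeff (R := ℚ) 1 G)^2 / 2 := by
  have hsq : PowerSeries.coeff (R := ℚ) 2 (G^2) = (PowerSeries.coeff (R := ℚ) 1 G)^2 := by
    rw [pow_two, PowerSeries.coeff_mul]
    rw [Finset.Nat.sum_antidiagonal_eq_sum_range_succ_mk]
    simp [Finset.sum_range_succ, h0, pow_two]
  simp [expPS, Finset.sum_range_succ, hsq]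

lemma binom_id1 (k r : ℕ) :
    ((r:ℚ)+1) * (Nat.choose k (r+1)) = ((k:ℚ)-r) * (Nat.choose k r) := by
  rcases le_or_gt r k with h | h
  · have := Nat.choose_succ_right_eq k r
    have hc : ((Nat.choose k (r+1) * (r+1) : ℕ) : ℚ) = ((Nat.choose k r * (k - r) : ℕ) : ℚ) := by
      exact_mod_cast congrArg (Nat.cast : ℕ → ℚ) this
    push_cast [Nat.cast_sub h] at hc
    linarith
  · rw [Nat.choose_eq_zero_of_lt h, Nat.choose_eq_zero_of_lt (by omega)]
    ring

lemma binom_id2 (k r : ℕ) :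
    (2*(r:ℚ)+1) * (Nat.choose (2*k) (2*r+1)) = (2*(k:ℚ)-2*r) * (Nat.choose (2*k) (2*r)) := by
  rcases le_or_gt r k with h | h
  · have := Nat.choose_succ_right_eq (2*k) (2*r)
    have hc : ((Nat.choose (2*k) (2*r+1) * (2*r+1) : ℕ) : ℚ)
        = ((Nat.choose (2*k) (2*r) * (2*k - 2*r) : ℕ) : ℚ) := by
      exact_mod_cast congrArg (Nat.cast : ℕ → ℚ) this
    push_cast [Nat.cast_sub (by omega : 2*r ≤ 2*k)] at hc
    linarith
  · rw [Nat.choose_eq_zero_of_lt (by omega), Nat.choose_eq_zero_of_lt (by omega)]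
    ring

/-- The explicit formula for the index `Ω(2, 2r+1, k)`: for `k ≥ 1` and `r ≥ 0`,
`(1/(2r+1)²)[x²]{exp((2r+1)F(k,r,x))} = −(1/4) C(2k, 2r+1) + (1/2)((r+1) C(k, r+1))²`. -/
theorem index_two_formula (k r : ℕ) (hk : 1 ≤ k) :
    (1 / (2 * (r : ℚ) + 1) ^ 2)
        * PowerSeries.coeff (R := ℚ) 2 (expPS (PowerSeries.C (R := ℚ) (2 * (r : ℚ) + 1) * Fser ℚ k r))
      = -(1 / 4) * (Nat.choose (2 * k) (2 * r + 1) : ℚ)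
        + (1 / 2) * (((r : ℚ) + 1) * (Nat.choose k (r + 1) : ℚ)) ^ 2 := by
  have hcne : (2 * (r : ℚ) + 1) ≠ 0 := by positivity
  have h0 : PowerSeries.coeff (R := ℚ) 0 (PowerSeries.C (R := ℚ) (2 * (r : ℚ) + 1) * Fser ℚ k r) = 0 := by
    simp [Fser]
  have h1 : PowerSeries.coeff (R := ℚ) 1 (PowerSeries.C (R := ℚ) (2 * (r : ℚ) + 1) * Fser ℚ k r)
      = (2 * (r : ℚ) + 1) * (((k:ℚ)-r) * (Nat.choose k r)) := by
    rw [PowerSeries.coeff_C_mul]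
    simp [Fser]
  have h2 : PowerSeries.coeff (R := ℚ) 2 (PowerSeries.C (R := ℚ) (2 * (r : ℚ) + 1) * Fser ℚ k r)
      = (2 * (r : ℚ) + 1) * (-(((k:ℚ)-r) * (Nat.choose (2*k) (2*r)) / 2)) := by
    rw [PowerSeries.coeff_C_mul]
    rw [show 2*k = k*2 from Nat.mul_comm 2 k, show 2*r = r*2 from Nat.mul_comm 2 r]
    simp [Fser]; ring
  rw [coeff_two_expPS _ h0, h1, h2]
  have hb1 := binom_id1 k r
  have hb2 := binom_id2 k r
  field_simp
  linear_combination (2 : ℚ) * hb2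
    - (4 * (2*(r:ℚ)+1) * (((r:ℚ)+1)*(Nat.choose k (r+1)) + ((k:ℚ)-r)*(Nat.choose k r))) * hb1
end

section
/- Let k be a positive integer, let z be a complex number with sin z ≠ 0, and let ξ_1, …, ξ_k be complex numbers such that sin(ξ_m − ξ_i) ≠ 0 for all m ≠ i. Then Σ_{m=1}^{k} Π_{i=1, i≠m}^{k} sin(ξ_m − ξ_i + z) / sin(ξ_m − ξ_i) = sin(kz) / sin(z). -/
open Polynomial Finset

lemma key_sum (n : ℕ) (s : ℂ) (hs0 : s ≠ 0) (hs1 : s ≠ 1) (u : Fin (n+1) → ℂ)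
    (hu0 : ∀ m, u m ≠ 0) (hui : Function.Injective u) :
    ∑ m : Fin (n+1), ∏ i ∈ univ.erase m, (s * u m - u i) / (u m - u i)
      = ∑ j ∈ range (n+1), s ^ j := by
  classical
  set A : Fin (n+1) → ℂ := fun m => ∏ i ∈ univ.erase m, (s * u m - u i) with hA
  set G : ℂ[X] := Lagrange.interpolate univ u A with hG
  set F : ℂ[X] := ∏ i : Fin (n+1), (C s * X - C (u i)) with hF
  set N : ℂ[X] := Lagrange.nodal univ u with hN
  have hinj : Set.InjOn u (univ : Finset (Fin (n+1))) := fun a _ b _ h => hui h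
  -- F rewritten
  have hF2 : F = C (s ^ (n+1)) * Lagrange.nodal univ (fun i => u i / s) := by
    have h1 : (C (s ^ (n+1)) : ℂ[X]) = ∏ _i : Fin (n+1), C s := by
      rw [prod_const, ← C_pow, card_univ, Fintype.card_fin]
    rw [hF, Lagrange.nodal_eq, h1, ← Finset.prod_mul_distrib]
    refine Finset.prod_congr rfl fun i _ => ?_
    rw [mul_sub, ← C_mul, mul_div_cancel₀ _ hs0]
  -- extended node map
  have hvinj : Function.Injective (Fin.cons (0:ℂ) u : Fin (n+2) → ℂ) := by
    intro a b hab
    induction a using Fin.cases <;> induction b using Fin.cases <;>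
      simp only [Fin.cons_zero, Fin.cons_succ] at hab ⊢
    · exact absurd hab.symm (hu0 _)
    · exact absurd hab (hu0 _)
    · exact congrArg Fin.succ (hui hab)
  have hFN : F = C (s - 1) * X * G + N := by
    have hD : F - (C (s - 1) * X * G + N) = 0 := by
      apply Polynomial.eq_zero_of_degree_lt_of_eval_index_eq_zero
        (univ : Finset (Fin (n+2))) (v := Fin.cons (0:ℂ) u)
        (fun a _ b _ h => hvinj h)
      · -- degree
        rw [card_univ, Fintype.card_fin]
        have hdF : F.degree ≤ ((n+1 : ℕ) : WithBot ℕ) := by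
          rw [hF2]
          refine le_trans (degree_mul_le _ _) ?_
          rw [Lagrange.degree_nodal, card_univ, Fintype.card_fin]
          exact add_le_of_nonpos_left degree_C_le
        have hdG : G.degree < ((n+1 : ℕ) : WithBot ℕ) := by
          have := Lagrange.degree_interpolate_lt (r := A) hinj
          rwa [card_univ, Fintype.card_fin] at this
        have hdN : N.degree ≤ ((n+1 : ℕ) : WithBot ℕ) := by
          rw [hN, Lagrange.degree_nodal, card_univ, Fintype.card_fin]
        have hlt : ((n+1 : ℕ) : WithBot ℕ) < ((n+2 : ℕ) : WithBot ℕ) := by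
          exact_mod_cast Nat.lt_succ_self _
        have hdXG : (C (s - 1) * X * G).degree < ((n+2 : ℕ) : WithBot ℕ) := by
          have h1 : (C (s - 1) * X * G).degree ≤ 1 + G.degree := by
            refine le_trans (degree_mul_le _ _) (add_le_add ?_ le_rfl)
            calc (C (s - 1) * X).degree ≤ (C (s - 1)).degree + X.degree :=
                  degree_mul_le _ _
              _ ≤ 0 + 1 := add_le_add degree_C_le degree_X_le
              _ = 1 := zero_add 1
          refine lt_of_le_of_lt h1 ?_
          have h2 : (1 : WithBot ℕ) + G.degree < 1 + ((n+1 : ℕ) : WithBot ℕ) :=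
            WithBot.add_lt_add_left (by simp) hdG
          refine lt_of_lt_of_le h2 (le_of_eq ?_)
          push_cast
          ring
        refine lt_of_le_of_lt (degree_sub_le _ _) (max_lt (lt_of_le_of_lt hdF hlt) ?_)
        exact lt_of_le_of_lt (degree_add_le _ _) (max_lt hdXG (lt_of_le_of_lt hdN hlt))
      · intro i _
        induction i using Fin.cases with
        | zero =>
          simp only [Fin.cons_zero, eval_sub, eval_add, eval_mul, eval_X, eval_C,
            mul_zero, zero_mul, eval_prod, hF, hN, Lagrange.eval_nodal]
          simp
        | succ j =>
          simp only [Fin.cons_succ, eval_sub, eval_add, eval_mul, eval_X, eval_C, hF, hN,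
            eval_prod]
          rw [hG, Lagrange.eval_interpolate_at_node A hinj (mem_univ j),
            Lagrange.eval_nodal_at_node (mem_univ j)]
          have hthis : ∏ i : Fin (n+1), (s * u j - u i) = (s * u j - u j) * A j :=
            (Finset.mul_prod_erase univ (fun i => s * u j - u i) (mem_univ j)).symm
          rw [hthis]
          ring
    exact sub_eq_zero.mp hD
  -- coefficient extraction at degree k
  have hcF : F.coeff (n+1) = s ^ (n+1) := by
    rw [hF2, coeff_C_mul]
    have : (Lagrange.nodal (univ : Finset (Fin (n+1))) (fun i => u i / s)).coeff (n+1) = 1 := by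
      have hm : (Lagrange.nodal (univ : Finset (Fin (n+1))) (fun i => u i / s)).Monic :=
        Lagrange.nodal_monic
      have hd : (Lagrange.nodal (univ : Finset (Fin (n+1))) (fun i => u i / s)).natDegree = (n+1) := by
        rw [Lagrange.natDegree_nodal, card_univ, Fintype.card_fin]
      have h1 := hm.coeff_natDegree; rwa [hd] at h1
    rw [this, mul_one]
  have hcN : N.coeff (n+1) = 1 := by
    have hm : N.Monic := Lagrange.nodal_monic
    have hd : N.natDegree = (n+1) := by
      rw [hN, Lagrange.natDegree_nodal, card_univ, Fintype.card_fin]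
    have h1 := hm.coeff_natDegree; rwa [hd] at h1
  have hcG : G.coeff n = ∑ m : Fin (n+1), A m * ∏ i ∈ univ.erase m, (u m - u i)⁻¹ := by
    rw [hG, Lagrange.interpolate_apply, finset_sum_coeff]
    refine Finset.sum_congr rfl fun m _ => ?_
    rw [coeff_C_mul]
    congr 1
    -- coeff n of basis
    have hb : Lagrange.basis univ u m
        = C (∏ i ∈ univ.erase m, (u m - u i)⁻¹) * Lagrange.nodal (univ.erase m) u := by
      rw [Lagrange.basis, Lagrange.nodal_eq, map_prod, ← Finset.prod_mul_distrib]
      exact Finset.prod_congr rfl fun j _ => rfl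
    rw [hb, coeff_C_mul]
    have hm : (Lagrange.nodal (univ.erase m) u).Monic := Lagrange.nodal_monic
    have hd : (Lagrange.nodal (univ.erase m) u).natDegree = n := by
      rw [Lagrange.natDegree_nodal, card_erase_of_mem (mem_univ m), card_univ,
        Fintype.card_fin]
      omega
    have h1 := hm.coeff_natDegree
    rw [hd] at h1
    rw [h1, mul_one]
  have hkey : s ^ (n+1) = (s - 1) * G.coeff n + 1 := by
    have := congrArg (fun p => Polynomial.coeff p (n+1)) hFN
    simp only [coeff_add, mul_assoc] at this
    rw [hcF, hcN, coeff_C_mul, show n+1 = n+1 from rfl, coeff_X_mul] at this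
    exact this
  -- conclude
  have hT : ∑ m : Fin (n+1), ∏ i ∈ univ.erase m, (s * u m - u i) / (u m - u i)
      = G.coeff n := by
    rw [hcG]
    refine Finset.sum_congr rfl fun m _ => ?_
    rw [hA, ← Finset.prod_mul_distrib]
    exact Finset.prod_congr rfl fun i _ => div_eq_mul_inv _ _
  rw [hT]
  have hgs : ((∑ j ∈ range (n+1), s ^ j)) * (s - 1) = s ^ (n+1) - 1 := geom_sum_mul s (n+1)
  have hs1' : s - 1 ≠ 0 := sub_ne_zero.mpr hs1
  have : (s - 1) * G.coeff n = (s - 1) * ∑ j ∈ range (n+1), s ^ j := by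
    rw [← sub_eq_iff_eq_add] at hkey
    rw [← hkey]
    linear_combination -hgs
  exact mul_left_cancel₀ hs1' this

lemma ratio_helper (a b t II : ℂ) (ha : a ≠ 0) (hb : b ≠ 0) (ht : t ≠ 0)
    (hII : II ≠ 0) (h : a ^ 2 - b ^ 2 ≠ 0) :
    ((b / (a * t) - a * t / b) * II / 2) / ((b / a - a / b) * II / 2)
      = (1 / t) * ((t ^ 2 * a ^ 2 - b ^ 2) / (a ^ 2 - b ^ 2)) := by
  have hba : (b / a - a / b) * II / 2 ≠ 0 := by
    intro hh
    apply h
    field_simp at hh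
    rw [mul_zero] at hh
    rcases mul_eq_zero.mp hh with h1 | h1
    · linear_combination -h1
    · exact absurd h1 hII
  rw [div_eq_iff hba]
  field_simp
  ring

/-- For a positive integer `k`, `z ∈ ℂ` with `sin z ≠ 0`, and `ξ_1, …, ξ_k ∈ ℂ` with
`sin(ξ_m − ξ_i) ≠ 0` for all `m ≠ i`,
`∑_{m=1}^{k} ∏_{i ≠ m} sin(ξ_m − ξ_i + z)/sin(ξ_m − ξ_i) = sin(kz)/sin(z)`. -/
theorem sine_sum_identity (k : ℕ) (hk : 0 < k) (z : ℂ) (hz : Complex.sin z ≠ 0)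
    (ξ : Fin k → ℂ) (hξ : ∀ m i : Fin k, m ≠ i → Complex.sin (ξ m - ξ i) ≠ 0) :
    ∑ m : Fin k, ∏ i ∈ Finset.univ.erase m,
        Complex.sin (ξ m - ξ i + z) / Complex.sin (ξ m - ξ i)
      = Complex.sin ((k : ℂ) * z) / Complex.sin z := by
  classical
  obtain ⟨n, rfl⟩ : ∃ n, k = n + 1 := ⟨k - 1, (Nat.succ_pred_eq_of_pos hk).symm⟩
  set I := Complex.I with hI
  set t := Complex.exp (z * I) with ht'
  set E : Fin (n+1) → ℂ := fun m => Complex.exp (ξ m * I) with hE'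
  set u : Fin (n+1) → ℂ := fun m => E m ^ 2 with hu'
  have ht : t ≠ 0 := Complex.exp_ne_zero _
  have hEne : ∀ m, E m ≠ 0 := fun m => Complex.exp_ne_zero _
  have hu0 : ∀ m, u m ≠ 0 := fun m => pow_ne_zero 2 (hEne m)
  -- sin formulas
  have hsin : ∀ w : ℂ, Complex.sin w
      = (Complex.exp (-(w * I)) - Complex.exp (w * I)) * I / 2 := by
    intro w
    rw [Complex.sin, neg_mul]
  have hsinz : Complex.sin z = (1 - t ^ 2) * I / (2 * t) := by
    rw [hsin z, Complex.exp_neg]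
    field_simp
    ring
  have hsinξ : ∀ m i : Fin (n+1),
      Complex.sin (ξ m - ξ i) = (u i - u m) * I / (2 * E m * E i) := by
    intro m i
    rw [hsin, show (ξ m - ξ i) * I = ξ m * I - ξ i * I by ring, Complex.exp_neg,
      Complex.exp_sub]
    rw [hu', hE']
    field_simp
  have hsinξz : ∀ m i : Fin (n+1),
      Complex.sin (ξ m - ξ i + z) = (u i - t ^ 2 * u m) * I / (2 * E m * E i * t) := by
    intro m i
    rw [hsin, show (ξ m - ξ i + z) * I = ξ m * I + z * I - ξ i * I by ring,
      Complex.exp_neg, Complex.exp_sub, Complex.exp_add]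
    rw [hu', hE', ht']
    field_simp
  have hs1 : t ^ 2 ≠ 1 := by
    intro h
    apply hz
    rw [hsinz, h]
    simp
  have huij : Function.Injective u := by
    intro m i h
    by_contra hne
    apply hξ m i hne
    rw [hsinξ m i, h]
    simp
  -- ratio identity
  have hratio : ∀ m i : Fin (n+1), m ≠ i →
      Complex.sin (ξ m - ξ i + z) / Complex.sin (ξ m - ξ i)
        = (1 / t) * ((t ^ 2 * u m - u i) / (u m - u i)) := by
    intro m i hmi
    have hne : u m ≠ u i := by
      intro h
      exact hξ m i hmi (by rw [hsinξ m i, h]; simp)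
    have hIne : I ≠ 0 := Complex.I_ne_zero
    have h2 : E m ^ 2 - E i ^ 2 ≠ 0 := sub_ne_zero.mpr hne
    have e1 : Complex.sin (ξ m - ξ i + z)
        = (E i / (E m * t) - E m * t / E i) * I / 2 := by
      rw [hsin, show (ξ m - ξ i + z) * I = (ξ m * I + z * I) - ξ i * I by ring,
        show -((ξ m * I + z * I) - ξ i * I) = ξ i * I - (ξ m * I + z * I) by ring,
        Complex.exp_sub, Complex.exp_sub, Complex.exp_add]
    have e2 : Complex.sin (ξ m - ξ i)
        = (E i / E m - E m / E i) * I / 2 := by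
      rw [hsin, show (ξ m - ξ i) * I = ξ m * I - ξ i * I by ring,
        show -(ξ m * I - ξ i * I) = ξ i * I - ξ m * I by ring,
        Complex.exp_sub, Complex.exp_sub]
    rw [e1, e2]
    exact ratio_helper (E m) (E i) t I (hEne m) (hEne i) ht hIne h2
  -- rewrite LHS
  have hLHS : ∑ m : Fin (n+1), ∏ i ∈ Finset.univ.erase m,
        Complex.sin (ξ m - ξ i + z) / Complex.sin (ξ m - ξ i)
      = (1 / t) ^ n * ∑ m : Fin (n+1), ∏ i ∈ Finset.univ.erase m,
          (t ^ 2 * u m - u i) / (u m - u i) := by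
    rw [Finset.mul_sum]
    refine Finset.sum_congr rfl fun m _ => ?_
    have hcard : (Finset.univ.erase m).card = n := by
      rw [Finset.card_erase_of_mem (Finset.mem_univ m), Finset.card_univ,
        Fintype.card_fin]
      omega
    calc ∏ i ∈ Finset.univ.erase m,
          Complex.sin (ξ m - ξ i + z) / Complex.sin (ξ m - ξ i)
        = ∏ i ∈ Finset.univ.erase m,
            (1 / t) * ((t ^ 2 * u m - u i) / (u m - u i)) :=
          Finset.prod_congr rfl fun i hi =>
            hratio m i (fun h => (Finset.mem_erase.mp hi).1 h.symm)
      _ = (1 / t) ^ n * ∏ i ∈ Finset.univ.erase m,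
            (t ^ 2 * u m - u i) / (u m - u i) := by
          rw [Finset.prod_mul_distrib, Finset.prod_const, hcard]
  rw [hLHS, key_sum n (t ^ 2) (pow_ne_zero 2 ht) hs1 u hu0 huij]
  -- RHS
  have hsinkz : Complex.sin (((n+1 : ℕ) : ℂ) * z)
      = (1 - (t ^ 2) ^ (n+1)) * I / (2 * t ^ (n+1)) := by
    rw [hsin, show ((n+1 : ℕ) : ℂ) * z * I = ((n+1 : ℕ) : ℂ) * (z * I) by ring,
      Complex.exp_neg, Complex.exp_nat_mul, ← ht']
    rw [← pow_mul]
    field_simp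
    ring
  rw [eq_div_iff hz, hsinkz, hsinz]
  have hgs : (1 - t ^ 2) * ∑ j ∈ Finset.range (n+1), (t ^ 2) ^ j
      = 1 - (t ^ 2) ^ (n+1) := by
    have := geom_sum_mul (t ^ 2) (n+1)
    linear_combination -this
  have htn : t ^ n ≠ 0 := pow_ne_zero _ ht
  have hIne : I ≠ 0 := Complex.I_ne_zero
  calc (1 / t) ^ n * (∑ j ∈ Finset.range (n+1), (t ^ 2) ^ j) * ((1 - t ^ 2) * I / (2 * t))
      = ((1 - t ^ 2) * ∑ j ∈ Finset.range (n+1), (t ^ 2) ^ j) * I / (2 * (t ^ n * t)) := by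
        rw [one_div, inv_pow]
        field_simp
    _ = (1 - (t ^ 2) ^ (n+1)) * I / (2 * t ^ (n+1)) := by rw [hgs]; ring
end
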